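/- A queue behavior b is legal if and only if b has a sequential witness. -/

import Mathlib

inductive QAction : Type
  | enq : ℕ → QAction
  | deq : Option ℕ → QAction
  deriving DecidableEq

structure QEvent : Type where
  uid : ℕ
  act : QAction
  deriving DecidableEq

def QEvent.isEnq : QEvent → Bool
  | ⟨_, QAction.enq _⟩ => true
  | _ => false

def QEvent.isDeq : QEvent → Bool
  | ⟨_, QAction.deq _⟩ => true
  | _ => false

abbrev Behavior := List QEvent

/-- One step of the queue LTS. -/
inductive QStep : List ℕ → QAction → List ℕ → Prop
  | enq (q : List ℕ) (x : ℕ) : QStep q (QAction.enq x) (q ++ [x])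
  | deq (x : ℕ) (q : List ℕ) : QStep (x :: q) (QAction.deq (some x)) q
  | deqNull : QStep [] (QAction.deq none) []

/-- A behavior is the trace of a run of the queue LTS from the given state. -/
inductive LegalFrom : List ℕ → Behavior → Prop
  | nil (q : List ℕ) : LegalFrom q []
  | cons {q q' : List ℕ} {a : QAction} {rest : Behavior} (u : ℕ) :
      QStep q a q' → LegalFrom q' rest → LegalFrom q (⟨u, a⟩ :: rest)

/-- A behavior is legal if it is the trace of a run of the queue LTS from ε. -/
def Legal (b : Behavior) : Prop := LegalFrom [] b

/-- `e` occurs strictly before `e'` in `b`. -/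
def Precedes (b : Behavior) (e e' : QEvent) : Prop :=
  ∃ i j : ℕ, i < j ∧ b[i]? = some e ∧ b[j]? = some e'

/-- Observational equivalence: same subsequence of enqueue events and of dequeue events. -/
def ObsEquiv (b1 b2 : Behavior) : Prop :=
  b1.filter QEvent.isEnq = b2.filter QEvent.isEnq ∧
  b1.filter QEvent.isDeq = b2.filter QEvent.isDeq

/-- Sequences consisting only of enqueue events. -/
inductive EnqStar : Behavior → Prop
  | nil : EnqStar []
  | cons (u x : ℕ) {rest : Behavior} : EnqStar rest → EnqStar (⟨u, QAction.enq x⟩ :: rest)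

/-- Canonical behaviors: the language ((deq NULL)* · enq(x)·deq(x))* · (deq NULL)* · (enq(x))*. -/
inductive Canonical : Behavior → Prop
  | tail {rest : Behavior} : EnqStar rest → Canonical rest
  | deqNull (u : ℕ) {rest : Behavior} :
      Canonical rest → Canonical (⟨u, QAction.deq none⟩ :: rest)
  | pair (u v x : ℕ) {rest : Behavior} :
      Canonical rest → Canonical (⟨u, QAction.enq x⟩ :: ⟨v, QAction.deq (some x)⟩ :: rest)

/-- `e` enqueues the same (non-NULL) value that `d` dequeues. -/
def SameVal (e d : QEvent) : Prop :=
  ∃ x, e.act = QAction.enq x ∧ d.act = QAction.deq (some x)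

/-- A sequential witness for a behavior `b`. -/
structure SeqWitness (b : Behavior) (μ : QEvent → Option QEvent) : Prop where
  codom : ∀ d ∈ b, d.isDeq = true → ∀ e, μ d = some e → e ∈ b ∧ e.isEnq = true
  val : ∀ d ∈ b, d.isDeq = true → ∀ e, μ d = some e → SameVal e d
  null : ∀ d ∈ b, d.isDeq = true → (μ d = none ↔ d.act = QAction.deq none)
  inj : ∀ d ∈ b, ∀ d' ∈ b, d.isDeq = true → d'.isDeq = true →
        ∀ e, μ d = some e → μ d' = some e → d = d'
  order : ∀ d ∈ b, d.isDeq = true → ∀ e, μ d = some e → Precedes b e d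
  fifo : ∀ e ∈ b, e.isEnq = true → ∀ d' ∈ b, d'.isDeq = true → ∀ e',
         μ d' = some e' → Precedes b e e' →
         ∃ d ∈ b, d.isDeq = true ∧ μ d = some e ∧ Precedes b d d'
  empty : ∀ d ∈ b, d.isDeq = true → μ d = none →
          {e : QEvent | e ∈ b ∧ e.isEnq = true ∧ Precedes b e d}.ncard =
          {d' : QEvent | d' ∈ b ∧ d'.isDeq = true ∧ Precedes b d' d ∧ μ d' ≠ none}.ncard


open List

lemma sub_asymm {α : Type*} {l : List α} (hnd : l.Nodup) {a b : α}
    (h1 : [a,b] <+ l) (h2 : [b,a] <+ l) : False := by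
  induction l with
  | nil => simp at h1
  | cons c t ih =>
    rcases List.sublist_cons_iff.1 h1 with h1' | ⟨r, hr, hrs⟩
    · rcases List.sublist_cons_iff.1 h2 with h2' | ⟨r2, hr2, hrs2⟩
      · exact ih (List.Nodup.of_cons hnd) h1' h2'
      · obtain ⟨rfl, rfl⟩ := List.cons_eq_cons.1 hr2.symm
        exact (List.nodup_cons.1 hnd).1 (h1'.subset (by simp))
    · obtain ⟨rfl, rfl⟩ := List.cons_eq_cons.1 hr.symm
      rcases List.sublist_cons_iff.1 h2 with h2' | ⟨r2, hr2, hrs2⟩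
      · exact (List.nodup_cons.1 hnd).1 (h2'.subset (by simp))
      · obtain ⟨rfl, rfl⟩ := List.cons_eq_cons.1 hr2.symm
        exact (List.nodup_cons.1 hnd).1 (hrs.subset (by simp))

lemma sub_total {α : Type*} {l : List α} {a b : α} (ha : a ∈ l) (hb : b ∈ l) (hne : a ≠ b) :
    [a,b] <+ l ∨ [b,a] <+ l := by
  induction l with
  | nil => simp at ha
  | cons c t ih =>
    rcases List.mem_cons.1 ha with rfl | ha'
    · left
      have hb' : b ∈ t := by
        rcases List.mem_cons.1 hb with h | h
        · exact absurd h hne.symm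
        · exact h
      exact (List.singleton_sublist.2 hb').cons₂ a
    · rcases List.mem_cons.1 hb with rfl | hb'
      · right
        exact (List.singleton_sublist.2 ha').cons₂ b
      · exact (ih ha' hb').imp (·.cons c) (·.cons c)

lemma precedes_iff {l : Behavior} {e e' : QEvent} :
    Precedes l e e' ↔ [e, e'] <+ l := by
  constructor
  · rintro ⟨i, j, hij, hi, hj⟩
    have hil : i < l.length := (List.getElem?_eq_some_iff.1 hi).1
    have hie : l[i] = e := (List.getElem?_eq_some_iff.1 hi).2
    have hdrop : l.drop i = e :: l.drop (i+1) := by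
      rw [List.drop_eq_getElem_cons hil, hie]
    have he' : e' ∈ l.drop (i+1) := by
      have hh : (l.drop (i+1))[j - (i+1)]? = some e' := by
        rw [List.getElem?_drop]
        rwa [Nat.add_sub_cancel' hij]
      obtain ⟨h1, h2⟩ := List.getElem?_eq_some_iff.1 hh
      exact h2 ▸ List.getElem_mem h1
    calc [e, e'] <+ e :: l.drop (i+1) := (List.singleton_sublist.2 he').cons₂ e
      _ = l.drop i := hdrop.symm
      _ <+ l := List.drop_sublist i l
  · intro h
    induction l with
    | nil => simp at h
    | cons c t ih =>
      rcases List.sublist_cons_iff.1 h with h' | ⟨r, hr, hrs⟩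
      · obtain ⟨i, j, hij, hi, hj⟩ := ih h'
        exact ⟨i+1, j+1, by omega, by simpa using hi, by simpa using hj⟩
      · obtain ⟨rfl, rfl⟩ := List.cons_eq_cons.1 hr.symm
        have he' : e' ∈ t := hrs.subset (by simp)
        obtain ⟨j, hj⟩ := List.mem_iff_getElem?.1 he'
        exact ⟨0, j+1, by omega, by simp, by simpa using hj⟩

lemma prec_total {l : Behavior} {a b : QEvent} (ha : a ∈ l) (hb : b ∈ l) (hne : a ≠ b) :
    Precedes l a b ∨ Precedes l b a := by
  rcases sub_total ha hb hne with h | h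
  · exact Or.inl (precedes_iff.2 h)
  · exact Or.inr (precedes_iff.2 h)

lemma prec_asymm {l : Behavior} (hnd : l.Nodup) {a b : QEvent}
    (h1 : Precedes l a b) (h2 : Precedes l b a) : False :=
  sub_asymm hnd (precedes_iff.1 h1) (precedes_iff.1 h2)

lemma prec_irrefl {l : Behavior} (hnd : l.Nodup) {a : QEvent} (h : Precedes l a a) : False :=
  prec_asymm hnd h h

/-- transfer down: if both in a sublist, precedes transfers down. -/
lemma prec_down {l l' : Behavior} (hsub : l <+ l') (hnd : l'.Nodup) {a b : QEvent}
    (ha : a ∈ l) (hb : b ∈ l) (h : Precedes l' a b) : Precedes l a b := by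
  have hne : a ≠ b := by rintro rfl; exact prec_irrefl hnd h
  rcases prec_total ha hb hne with h' | h'
  · exact h'
  · exact absurd h (fun h => prec_asymm hnd h (precedes_iff.2 ((precedes_iff.1 h').trans hsub)))

lemma prec_up {l l' : Behavior} (hsub : l <+ l') {a b : QEvent}
    (h : Precedes l a b) : Precedes l' a b :=
  precedes_iff.2 ((precedes_iff.1 h).trans hsub)

lemma mem_of_sublist_mid {α : Type*} {l1 l2 : List α} {x y : α} (h : [x,y] <+ l1 ++ y :: l2)
    (hxy : x ≠ y) (hy : y ∉ l2) : x ∈ l1 := by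
  rcases List.sublist_append_iff.1 h with ⟨s, t, hst, hs, ht⟩
  rcases s with _ | ⟨a, _ | ⟨b, _ | ⟨c, s⟩⟩⟩
  · simp only [List.nil_append] at hst
    subst hst
    rcases List.sublist_cons_iff.1 ht with h' | ⟨r, hr, hrs⟩
    · exact absurd (h'.subset (by simp)) hy
    · obtain ⟨rfl, -⟩ := List.cons_eq_cons.1 hr.symm
      exact absurd rfl hxy
  · obtain ⟨rfl, -⟩ := List.cons_eq_cons.1 hst
    exact hs.subset (by simp)
  · obtain ⟨rfl, -⟩ := List.cons_eq_cons.1 hst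
    exact hs.subset (by simp)
  · exfalso
    have := congrArg List.length hst
    simp [List.length_append] at this

lemma isEnq_iff {e : QEvent} : e.isEnq = true ↔ ∃ x, e.act = QAction.enq x := by
  obtain ⟨u, a⟩ := e; cases a <;> simp [QEvent.isEnq]

lemma isDeq_iff {e : QEvent} : e.isDeq = true ↔ ∃ y, e.act = QAction.deq y := by
  obtain ⟨u, a⟩ := e; cases a <;> simp [QEvent.isDeq]

lemma not_enq_deq {e : QEvent} (h1 : e.isEnq = true) (h2 : e.isDeq = true) : False := by
  obtain ⟨u, a⟩ := e; cases a <;> simp [QEvent.isEnq, QEvent.isDeq] at h1 h2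

lemma ncard_mem_list {l : List QEvent} (hnd : l.Nodup) :
    {x : QEvent | x ∈ l}.ncard = l.length := by
  have : {x : QEvent | x ∈ l} = ↑l.toFinset := by ext x; simp
  rw [this, Set.ncard_coe_finset, List.toFinset_card_of_nodup hnd]

lemma finite_sub_list {l : List QEvent} {s : Set QEvent} (hs : ∀ x ∈ s, x ∈ l) : s.Finite :=
  l.finite_toSet.subset hs


abbrev Pending (P : List QEvent) (q : List ℕ) : Prop :=
  List.Forall₂ (fun p x => p.act = QAction.enq x) P q

lemma pending_enq {P : List QEvent} {q : List ℕ} (h : Pending P q) :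
    ∀ p ∈ P, p.isEnq = true := by
  induction h with
  | nil => simp
  | cons h1 h2 ih =>
    intro p hp
    rcases List.mem_cons.1 hp with rfl | hp'
    · exact isEnq_iff.2 ⟨_, h1⟩
    · exact ih p hp'

lemma prec_head {a z : QEvent} {t : Behavior} (h : z ∈ t) : Precedes (a :: t) a z :=
  precedes_iff.2 ((List.singleton_sublist.2 h).cons₂ a)

lemma prec_head_elim {a z : QEvent} {t : Behavior} (hnd : (a :: t).Nodup)
    (h : Precedes (a :: t) z a) : False := by
  rcases List.sublist_cons_iff.1 (precedes_iff.1 h) with h' | ⟨r, hr, hrs⟩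
  · exact (List.nodup_cons.1 hnd).1 (h'.subset (by simp))
  · obtain ⟨rfl, rfl⟩ := List.cons_eq_cons.1 hr.symm
    exact (List.nodup_cons.1 hnd).1 (hrs.subset (by simp))

lemma prec_mid {P rest : Behavior} {d z : QEvent} (h : z ∈ rest) :
    Precedes (P ++ d :: rest) d z :=
  precedes_iff.2 (((List.singleton_sublist.2 h).cons₂ d).trans
    (List.sublist_append_right P (d :: rest)))

lemma legal_witness {q0 : List ℕ} {b : Behavior} (hl : LegalFrom q0 b) :
    ∀ P : List QEvent, Pending P q0 → (P ++ b).Nodup → ∃ μ, SeqWitness (P ++ b) μ := by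
  induction hl with
  | nil q =>
    intro P hP hnd
    have hdeq : ∀ z ∈ P ++ ([] : Behavior), z.isDeq = true → False := by
      intro z hz hd
      rw [List.append_nil] at hz
      exact not_enq_deq (pending_enq hP z hz) hd
    exact ⟨fun _ => none, {
      codom := fun d hd hdq => (hdeq d hd hdq).elim
      val := fun d hd hdq => (hdeq d hd hdq).elim
      null := fun d hd hdq => (hdeq d hd hdq).elim
      inj := fun d hd d' hd' hdq => (hdeq d hd hdq).elim
      order := fun d hd hdq => (hdeq d hd hdq).elim
      fifo := fun e he hee d' hd' hdq' => (hdeq d' hd' hdq').elim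
      empty := fun d hd hdq => (hdeq d hd hdq).elim }⟩
  | @cons q q' a rest u hstep hrest ih =>
    cases hstep with
    | enq q x =>
      intro P hP hnd
      have hsingle : Pending [⟨u, QAction.enq x⟩] [x] :=
        List.Forall₂.cons rfl List.Forall₂.nil
      have hP' : Pending (P ++ [⟨u, QAction.enq x⟩]) (q ++ [x]) :=
        List.rel_append hP hsingle
      have hnd' : ((P ++ [(⟨u, QAction.enq x⟩ : QEvent)]) ++ rest).Nodup := by
        simpa [List.append_assoc] using hnd
      obtain ⟨μ, hμ⟩ := ih _ hP' hnd'
      exact ⟨μ, by simpa [List.append_assoc] using hμ⟩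
    | deq x qq =>
      intro P hP hnd
      obtain ⟨E, P', rfl, hEx, hP'⟩ :
          ∃ E P', P = E :: P' ∧ E.act = QAction.enq x ∧ Pending P' q' := by
        cases hP with
        | cons h1 h2 => exact ⟨_, _, rfl, h1, h2⟩
      simp only [List.cons_append]
      set d : QEvent := ⟨u, QAction.deq (some x)⟩ with hd_def
      -- lists
      have hnd' : (E :: (P' ++ d :: rest)).Nodup := hnd
      have hndt : (P' ++ d :: rest).Nodup := hnd'.of_cons
      have hE_not : E ∉ P' ++ d :: rest := (List.nodup_cons.1 hnd').1
      have hndP' : P'.Nodup := (List.nodup_append.1 hndt).1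
      have hnddr : (d :: rest).Nodup := (List.nodup_append.1 hndt).2.1
      have hdisj : P'.Disjoint (d :: rest) := fun a ha hb => (List.nodup_append.1 hndt).2.2 a ha a hb rfl
      have hd_rest : d ∉ rest := (List.nodup_cons.1 hnddr).1
      have hd_P' : d ∉ P' := fun h => hdisj h (List.mem_cons_self)
      have hd_old : d ∉ P' ++ rest := by
        intro h; rcases List.mem_append.1 h with h | h
        · exact hd_P' h
        · exact hd_rest h
      have hE_old : E ∉ P' ++ rest := by
        intro h; apply hE_not
        rcases List.mem_append.1 h with h | h
        · exact List.mem_append_left _ h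
        · exact List.mem_append_right _ (List.mem_cons_of_mem d h)
      have sub1 : P' ++ rest <+ P' ++ d :: rest :=
        (List.sublist_cons_self d rest).append_left P'
      have sub_on : P' ++ rest <+ E :: (P' ++ d :: rest) := sub1.cons E
      have hnd_old : (P' ++ rest).Nodup := sub1.nodup hndt
      obtain ⟨μ', hW⟩ := ih P' hP' hnd_old
      classical
      set μ : QEvent → Option QEvent := fun z => if z = d then some E else μ' z with hμ_def
      have hμd : μ d = some E := if_pos rfl
      have hμne : ∀ z, z ≠ d → μ z = μ' z := fun z h => if_neg h
      have hrest_old : ∀ z ∈ rest, z ∈ P' ++ rest := fun z hz => List.mem_append_right _ hz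
      have hmem_new : ∀ z ∈ P' ++ rest, z ∈ E :: (P' ++ d :: rest) :=
        fun z hz => sub_on.subset hz
      have hrest_new : ∀ z ∈ rest, z ∈ E :: (P' ++ d :: rest) :=
        fun z hz => hmem_new z (hrest_old z hz)
      have hd_new : d ∈ E :: (P' ++ d :: rest) :=
        List.mem_cons_of_mem E (List.mem_append_right _ (List.mem_cons_self))
      have hE_new : E ∈ E :: (P' ++ d :: rest) := List.mem_cons_self
      have hEenq : E.isEnq = true := isEnq_iff.2 ⟨x, hEx⟩
      have hdDeq : d.isDeq = true := by simp [hd_def, QEvent.isDeq]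
      have hdnE : ¬ d.isEnq = true := fun h => not_enq_deq h hdDeq
      have hdeq_cases : ∀ z ∈ E :: (P' ++ d :: rest), z.isDeq = true → z = d ∨ z ∈ rest := by
        intro z hz hzd
        rcases List.mem_cons.1 hz with rfl | hz'
        · exact absurd hzd (fun h => not_enq_deq hEenq h)
        rcases List.mem_append.1 hz' with h | h
        · exact absurd hzd (fun hh => not_enq_deq (pending_enq hP' z h) hh)
        · rcases List.mem_cons.1 h with rfl | h
          · exact Or.inl rfl
          · exact Or.inr h
      have hold_ne_d : ∀ z ∈ P' ++ rest, z ≠ d := fun z hz h => hd_old (h ▸ hz)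
      have hold_ne_E : ∀ z ∈ P' ++ rest, z ≠ E := fun z hz h => hE_old (h ▸ hz)
      -- down-transfer of precedence for elements of the old list
      have hprec_down : ∀ z z', z ∈ P' ++ rest → z' ∈ P' ++ rest →
          Precedes (E :: (P' ++ d :: rest)) z z' → Precedes (P' ++ rest) z z' := by
        intro z z' hz hz' h
        exact prec_down sub_on hnd' hz hz' h
      have hprec_up : ∀ z z', Precedes (P' ++ rest) z z' →
          Precedes (E :: (P' ++ d :: rest)) z z' := fun z z' h => prec_up sub_on h
      refine ⟨μ, ?_⟩
      have hprec_d' : ∀ z ∈ rest, Precedes (E :: (P' ++ d :: rest)) d z := by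
        intro z hz
        exact precedes_iff.2 ((precedes_iff.1 (prec_mid (P := P') hz)).cons E)
      -- codom of μ' lands in old list
      have hcodom' : ∀ d0 ∈ rest, d0.isDeq = true → ∀ e0, μ' d0 = some e0 →
          e0 ∈ P' ++ rest ∧ e0.isEnq = true :=
        fun d0 h0 hdq e0 he0 => hW.codom d0 (hrest_old d0 h0) hdq e0 he0
      refine {
        codom := ?_, val := ?_, null := ?_, inj := ?_, order := ?_, fifo := ?_, empty := ?_ }
      · intro d0 hd0 hdq e0 he0
        rcases hdeq_cases d0 hd0 hdq with rfl | h0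
        · rw [hμd] at he0
          exact ⟨(Option.some.injEq _ _ ▸ he0 : E = e0) ▸ hE_new, by
            cases he0; exact hEenq⟩
        · rw [hμne d0 (hold_ne_d d0 (hrest_old d0 h0))] at he0
          obtain ⟨hmem, henq⟩ := hcodom' d0 h0 hdq e0 he0
          exact ⟨hmem_new e0 hmem, henq⟩
      · intro d0 hd0 hdq e0 he0
        rcases hdeq_cases d0 hd0 hdq with rfl | h0
        · rw [hμd] at he0
          cases he0
          exact ⟨x, hEx, rfl⟩
        · rw [hμne d0 (hold_ne_d d0 (hrest_old d0 h0))] at he0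
          exact hW.val d0 (hrest_old d0 h0) hdq e0 he0
      · intro d0 hd0 hdq
        rcases hdeq_cases d0 hd0 hdq with rfl | h0
        · rw [hμd]
          constructor
          · intro h; cases h
          · intro h; cases h
        · rw [hμne d0 (hold_ne_d d0 (hrest_old d0 h0))]
          exact hW.null d0 (hrest_old d0 h0) hdq
      · intro d0 hd0 d1 hd1 hdq0 hdq1 e0 he0 he1
        rcases hdeq_cases d0 hd0 hdq0 with rfl | h0 <;>
          rcases hdeq_cases d1 hd1 hdq1 with rfl | h1
        · rfl
        · exfalso
          rw [hμd] at he0; cases he0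
          rw [hμne d1 (hold_ne_d d1 (hrest_old d1 h1))] at he1
          exact hE_old (hcodom' d1 h1 hdq1 _ he1).1
        · exfalso
          rw [hμd] at he1; cases he1
          rw [hμne d0 (hold_ne_d d0 (hrest_old d0 h0))] at he0
          exact hE_old (hcodom' d0 h0 hdq0 _ he0).1
        · rw [hμne d0 (hold_ne_d d0 (hrest_old d0 h0))] at he0
          rw [hμne d1 (hold_ne_d d1 (hrest_old d1 h1))] at he1
          exact hW.inj d0 (hrest_old d0 h0) d1 (hrest_old d1 h1) hdq0 hdq1 e0 he0 he1
      · intro d0 hd0 hdq e0 he0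
        rcases hdeq_cases d0 hd0 hdq with rfl | h0
        · rw [hμd] at he0; cases he0
          exact prec_head (List.mem_append_right _ (List.mem_cons_self))
        · rw [hμne d0 (hold_ne_d d0 (hrest_old d0 h0))] at he0
          exact hprec_up _ _ (hW.order d0 (hrest_old d0 h0) hdq e0 he0)
      · intro e0 he0 henq d' hd' hdq' e1 he1 hprec
        rcases hdeq_cases d' hd' hdq' with rfl | h1
        · rw [hμd] at he1; cases he1
          exact absurd hprec (fun h => prec_head_elim hnd' h)
        · rw [hμne d' (hold_ne_d d' (hrest_old d' h1))] at he1
          rcases List.mem_cons.1 he0 with rfl | he0'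
          · -- e0 = E : use d itself
            exact ⟨d, hd_new, hdDeq, hμd, hprec_d' d' h1⟩
          · have he0ne : e0 ≠ d := fun h => hdnE (h ▸ henq)
            have he0old : e0 ∈ P' ++ rest := by
              rcases List.mem_append.1 he0' with h | h
              · exact List.mem_append_left _ h
              · rcases List.mem_cons.1 h with rfl | h
                · exact absurd rfl he0ne
                · exact List.mem_append_right _ h
            have he1old : e1 ∈ P' ++ rest := (hcodom' d' h1 hdq' e1 he1).1
            have hp : Precedes (P' ++ rest) e0 e1 := hprec_down _ _ he0old he1old hprec
            obtain ⟨d1, hd1mem, hd1deq, hd1μ, hd1prec⟩ :=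
              hW.fifo e0 he0old henq d' (hrest_old d' h1) hdq' e1 he1 hp
            exact ⟨d1, hmem_new d1 hd1mem, hd1deq,
              (hμne d1 (hold_ne_d d1 hd1mem)).trans hd1μ,
              hprec_up _ _ hd1prec⟩
      · intro d0 hd0 hdq hnone
        have hd0ne : d0 ≠ d := fun h => by rw [h, hμd] at hnone; cases hnone
        rcases hdeq_cases d0 hd0 hdq with rfl | h0
        · exact absurd rfl hd0ne
        have hd0old : d0 ∈ P' ++ rest := hrest_old d0 h0
        have hnone' : μ' d0 = none := by rw [← hμne d0 hd0ne]; exact hnone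
        have hAeq : {e : QEvent | e ∈ E :: (P' ++ d :: rest) ∧ e.isEnq = true ∧
            Precedes (E :: (P' ++ d :: rest)) e d0} =
            insert E {e : QEvent | e ∈ P' ++ rest ∧ e.isEnq = true ∧
              Precedes (P' ++ rest) e d0} := by
          ext z
          simp only [Set.mem_insert_iff, Set.mem_setOf_eq]
          constructor
          · rintro ⟨hz, hzenq, hzp⟩
            rcases List.mem_cons.1 hz with rfl | hz'
            · exact Or.inl rfl
            right
            have hzne : z ≠ d := fun h => (not_enq_deq (h ▸ hzenq) hdDeq)
            have hzold : z ∈ P' ++ rest := by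
              rcases List.mem_append.1 hz' with h | h
              · exact List.mem_append_left _ h
              · rcases List.mem_cons.1 h with rfl | h
                · exact absurd rfl hzne
                · exact List.mem_append_right _ h
            exact ⟨hzold, hzenq, hprec_down _ _ hzold hd0old hzp⟩
          · rintro (rfl | ⟨hz, hzenq, hzp⟩)
            · exact ⟨hE_new, hEenq,
                prec_head (List.mem_append_right _ (List.mem_cons_of_mem d h0))⟩
            · exact ⟨hmem_new z hz, hzenq, hprec_up _ _ hzp⟩
        have hBeq : {d' : QEvent | d' ∈ E :: (P' ++ d :: rest) ∧ d'.isDeq = true ∧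
            Precedes (E :: (P' ++ d :: rest)) d' d0 ∧ μ d' ≠ none} =
            insert d {d' : QEvent | d' ∈ P' ++ rest ∧ d'.isDeq = true ∧
              Precedes (P' ++ rest) d' d0 ∧ μ' d' ≠ none} := by
          ext z
          simp only [Set.mem_insert_iff, Set.mem_setOf_eq]
          constructor
          · rintro ⟨hz, hzdeq, hzp, hzμ⟩
            rcases hdeq_cases z hz hzdeq with rfl | hz'
            · exact Or.inl rfl
            right
            have hzold : z ∈ P' ++ rest := hrest_old z hz'
            refine ⟨hzold, hzdeq, hprec_down _ _ hzold hd0old hzp, ?_⟩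
            rwa [hμne z (hold_ne_d z hzold)] at hzμ
          · rintro (rfl | ⟨hz, hzdeq, hzp, hzμ⟩)
            · exact ⟨hd_new, hdDeq, hprec_d' d0 h0, by rw [hμd]; simp⟩
            · refine ⟨hmem_new z hz, hzdeq, hprec_up _ _ hzp, ?_⟩
              rwa [hμne z (hold_ne_d z hz)]
        rw [hAeq, hBeq]
        have hfinA : {e : QEvent | e ∈ P' ++ rest ∧ e.isEnq = true ∧
            Precedes (P' ++ rest) e d0}.Finite :=
          finite_sub_list (l := P' ++ rest) (fun z hz => hz.1)
        have hfinB : {d' : QEvent | d' ∈ P' ++ rest ∧ d'.isDeq = true ∧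
            Precedes (P' ++ rest) d' d0 ∧ μ' d' ≠ none}.Finite :=
          finite_sub_list (l := P' ++ rest) (fun z hz => hz.1)
        rw [Set.ncard_insert_of_notMem (fun h => hE_old h.1) hfinA,
          Set.ncard_insert_of_notMem (fun h => hd_old h.1) hfinB,
          hW.empty d0 hd0old hdq hnone']
    | deqNull =>
      intro P hP hnd
      have hP0 : P = [] := by cases hP; rfl
      subst hP0
      simp only [List.nil_append] at hnd ⊢
      set d : QEvent := ⟨u, QAction.deq none⟩ with hd_def
      have hndr : rest.Nodup := hnd.of_cons
      have hd_rest : d ∉ rest := (List.nodup_cons.1 hnd).1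
      obtain ⟨μ', hW⟩ := ih [] List.Forall₂.nil (by simpa using hndr)
      simp only [List.nil_append] at hW
      classical
      set μ : QEvent → Option QEvent := fun z => if z = d then none else μ' z with hμ_def
      have hμd : μ d = none := if_pos rfl
      have hμne : ∀ z, z ≠ d → μ z = μ' z := fun z h => if_neg h
      have hrest_ne : ∀ z ∈ rest, z ≠ d := fun z hz h => hd_rest (h ▸ hz)
      have sub0 : rest <+ d :: rest := List.sublist_cons_self d rest
      have hdDeq : d.isDeq = true := by simp [hd_def, QEvent.isDeq]
      have hdeq_cases : ∀ z ∈ d :: rest, z = d ∨ z ∈ rest := fun z hz => List.mem_cons.1 hz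
      have hprec_down : ∀ z z', z ∈ rest → z' ∈ rest →
          Precedes (d :: rest) z z' → Precedes rest z z' :=
        fun z z' hz hz' h => prec_down sub0 hnd hz hz' h
      have hprec_up : ∀ z z', Precedes rest z z' → Precedes (d :: rest) z z' :=
        fun z z' h => prec_up sub0 h
      refine ⟨μ, ?_⟩
      refine {
        codom := ?_, val := ?_, null := ?_, inj := ?_, order := ?_, fifo := ?_, empty := ?_ }
      · intro d0 hd0 hdq e0 he0
        rcases hdeq_cases d0 hd0 with rfl | h0
        · rw [hμd] at he0; cases he0
        · rw [hμne d0 (hrest_ne d0 h0)] at he0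
          obtain ⟨hm, he⟩ := hW.codom d0 h0 hdq e0 he0
          exact ⟨List.mem_cons_of_mem d hm, he⟩
      · intro d0 hd0 hdq e0 he0
        rcases hdeq_cases d0 hd0 with rfl | h0
        · rw [hμd] at he0; cases he0
        · rw [hμne d0 (hrest_ne d0 h0)] at he0
          exact hW.val d0 h0 hdq e0 he0
      · intro d0 hd0 hdq
        rcases hdeq_cases d0 hd0 with rfl | h0
        · rw [hμd]; simp [hd_def]
        · rw [hμne d0 (hrest_ne d0 h0)]
          exact hW.null d0 h0 hdq
      · intro d0 hd0 d1 hd1 hdq0 hdq1 e0 he0 he1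
        rcases hdeq_cases d0 hd0 with rfl | h0
        · rw [hμd] at he0; cases he0
        rcases hdeq_cases d1 hd1 with rfl | h1
        · rw [hμd] at he1; cases he1
        rw [hμne d0 (hrest_ne d0 h0)] at he0
        rw [hμne d1 (hrest_ne d1 h1)] at he1
        exact hW.inj d0 h0 d1 h1 hdq0 hdq1 e0 he0 he1
      · intro d0 hd0 hdq e0 he0
        rcases hdeq_cases d0 hd0 with rfl | h0
        · rw [hμd] at he0; cases he0
        · rw [hμne d0 (hrest_ne d0 h0)] at he0
          exact hprec_up _ _ (hW.order d0 h0 hdq e0 he0)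
      · intro e0 he0 henq d' hd' hdq' e1 he1 hprec
        rcases hdeq_cases d' hd' with rfl | h1
        · rw [hμd] at he1; cases he1
        rw [hμne d' (hrest_ne d' h1)] at he1
        have he0ne : e0 ≠ d := fun h => not_enq_deq henq (h ▸ hdDeq)
        have he0r : e0 ∈ rest := by
          rcases List.mem_cons.1 he0 with rfl | h
          · exact absurd rfl he0ne
          · exact h
        have he1r : e1 ∈ rest := (hW.codom d' h1 hdq' e1 he1).1
        have hp : Precedes rest e0 e1 := hprec_down _ _ he0r he1r hprec
        obtain ⟨d1, hd1mem, hd1deq, hd1μ, hd1prec⟩ :=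
          hW.fifo e0 he0r henq d' h1 hdq' e1 he1 hp
        exact ⟨d1, List.mem_cons_of_mem d hd1mem, hd1deq,
          (hμne d1 (hrest_ne d1 hd1mem)).trans hd1μ, hprec_up _ _ hd1prec⟩
      · intro d0 hd0 hdq hnone
        rcases hdeq_cases d0 hd0 with rfl | h0
        · -- both sets are empty
          have hA : {e : QEvent | e ∈ d :: rest ∧ e.isEnq = true ∧
              Precedes (d :: rest) e d} = ∅ := by
            ext z
            simp only [Set.mem_setOf_eq, Set.mem_empty_iff_false, iff_false]
            rintro ⟨hz, hzenq, hzp⟩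
            exact prec_head_elim hnd hzp
          have hB : {d' : QEvent | d' ∈ d :: rest ∧ d'.isDeq = true ∧
              Precedes (d :: rest) d' d ∧ μ d' ≠ none} = ∅ := by
            ext z
            simp only [Set.mem_setOf_eq, Set.mem_empty_iff_false, iff_false]
            rintro ⟨hz, hzdeq, hzp, hzμ⟩
            exact prec_head_elim hnd hzp
          rw [hA, hB]
        · have hnone' : μ' d0 = none := by
            rw [← hμne d0 (hrest_ne d0 h0)]; exact hnone
          have hAeq : {e : QEvent | e ∈ d :: rest ∧ e.isEnq = true ∧
              Precedes (d :: rest) e d0} =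
              {e : QEvent | e ∈ rest ∧ e.isEnq = true ∧ Precedes rest e d0} := by
            ext z
            simp only [Set.mem_setOf_eq]
            constructor
            · rintro ⟨hz, hzenq, hzp⟩
              have hzne : z ≠ d := fun h => not_enq_deq hzenq (h ▸ hdDeq)
              have hzr : z ∈ rest := by
                rcases List.mem_cons.1 hz with rfl | h
                · exact absurd rfl hzne
                · exact h
              exact ⟨hzr, hzenq, hprec_down _ _ hzr h0 hzp⟩
            · rintro ⟨hz, hzenq, hzp⟩
              exact ⟨List.mem_cons_of_mem d hz, hzenq, hprec_up _ _ hzp⟩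
          have hBeq : {d' : QEvent | d' ∈ d :: rest ∧ d'.isDeq = true ∧
              Precedes (d :: rest) d' d0 ∧ μ d' ≠ none} =
              {d' : QEvent | d' ∈ rest ∧ d'.isDeq = true ∧
                Precedes rest d' d0 ∧ μ' d' ≠ none} := by
            ext z
            simp only [Set.mem_setOf_eq]
            constructor
            · rintro ⟨hz, hzdeq, hzp, hzμ⟩
              have hzne : z ≠ d := by
                rintro rfl
                exact hzμ hμd
              have hzr : z ∈ rest := by
                rcases List.mem_cons.1 hz with rfl | h
                · exact absurd rfl hzne
                · exact h
              refine ⟨hzr, hzdeq, hprec_down _ _ hzr h0 hzp, ?_⟩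
              rwa [hμne z hzne] at hzμ
            · rintro ⟨hz, hzdeq, hzp, hzμ⟩
              refine ⟨List.mem_cons_of_mem d hz, hzdeq, hprec_up _ _ hzp, ?_⟩
              rwa [hμne z (hrest_ne z hz)]
          rw [hAeq, hBeq]
          exact hW.empty d0 h0 hdq hnone'


lemma witness_legal : ∀ (b : Behavior) (P : List QEvent) (q : List ℕ)
    (μ : QEvent → Option QEvent),
    Pending P q → (P ++ b).Nodup → SeqWitness (P ++ b) μ → LegalFrom q b := by
  intro b
  induction b with
  | nil =>
    intro P q μ _ _ _
    exact LegalFrom.nil q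
  | cons e rest ih =>
    intro P q μ hP hnd hW
    obtain ⟨u, a⟩ := e
    set e : QEvent := ⟨u, a⟩ with he_def
    have hmem_e : e ∈ P ++ e :: rest :=
      List.mem_append_right _ (List.mem_cons_self)
    have hndP : P.Nodup := (List.nodup_append.1 hnd).1
    have hnder : (e :: rest).Nodup := (List.nodup_append.1 hnd).2.1
    have he_rest : e ∉ rest := (List.nodup_cons.1 hnder).1
    cases a with
    | enq x =>
      refine LegalFrom.cons u (QStep.enq q x) ?_
      have hsingle : Pending [e] [x] := List.Forall₂.cons rfl List.Forall₂.nil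
      exact ih (P ++ [e]) (q ++ [x]) μ (List.rel_append hP hsingle)
        (by simpa [List.append_assoc] using hnd)
        (by simpa [List.append_assoc] using hW)
    | deq o =>
      have heDeq : e.isDeq = true := by simp [he_def, QEvent.isDeq]
      cases o with
      | none =>
        have hμe : μ e = none := (hW.null e hmem_e heDeq).2 rfl
        -- counting: P must be empty
        have hA : {z : QEvent | z ∈ P ++ e :: rest ∧ z.isEnq = true ∧
            Precedes (P ++ e :: rest) z e} = {z : QEvent | z ∈ P} := by
          ext z
          simp only [Set.mem_setOf_eq]
          constructor
          · rintro ⟨hz, hzenq, hzp⟩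
            exact mem_of_sublist_mid (precedes_iff.1 hzp)
              (fun h => not_enq_deq (h ▸ hzenq) heDeq) he_rest
          · intro hz
            refine ⟨List.mem_append_left _ hz, pending_enq hP z hz, ?_⟩
            refine precedes_iff.2 ?_
            have : [z] ++ [e] <+ P ++ e :: rest :=
              List.Sublist.append (List.singleton_sublist.2 hz)
                ((List.nil_sublist rest).cons₂ e)
            simpa using this
        have hB : {z : QEvent | z ∈ P ++ e :: rest ∧ z.isDeq = true ∧
            Precedes (P ++ e :: rest) z e ∧ μ z ≠ none} = ∅ := by
          ext z
          simp only [Set.mem_setOf_eq, Set.mem_empty_iff_false, iff_false]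
          rintro ⟨hz, hzdeq, hzp, hzμ⟩
          have hzne : z ≠ e := fun h => hzμ (h ▸ hμe)
          have hzP : z ∈ P := mem_of_sublist_mid (precedes_iff.1 hzp) hzne he_rest
          exact not_enq_deq (pending_enq hP z hzP) hzdeq
        have hcount := hW.empty e hmem_e heDeq hμe
        rw [hA, hB, Set.ncard_empty, ncard_mem_list hndP] at hcount
        have hP0 : P = [] := List.length_eq_zero_iff.1 hcount
        subst hP0
        have hq0 : q = [] := by cases hP; rfl
        subst hq0
        simp only [List.nil_append] at hnd hW
        refine LegalFrom.cons u QStep.deqNull ?_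
        have hndr : rest.Nodup := hnd.of_cons
        have sub0 : rest <+ e :: rest := List.sublist_cons_self e rest
        have hrest_full : ∀ z ∈ rest, z ∈ e :: rest := fun z hz => List.mem_cons_of_mem e hz
        have hcodom : ∀ d0 ∈ rest, d0.isDeq = true → ∀ e0, μ d0 = some e0 →
            e0 ∈ rest ∧ e0.isEnq = true := by
          intro d0 h0 hdq e0 he0
          obtain ⟨hm, henq⟩ := hW.codom d0 (hrest_full d0 h0) hdq e0 he0
          refine ⟨?_, henq⟩
          rcases List.mem_cons.1 hm with rfl | h
          · exact absurd henq (fun h => not_enq_deq h heDeq)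
          · exact h
        refine ih [] [] μ List.Forall₂.nil (by simpa using hndr) ?_
        simp only [List.nil_append]
        refine {
          codom := hcodom, val := ?_, null := ?_, inj := ?_, order := ?_,
          fifo := ?_, empty := ?_ }
        · exact fun d0 h0 hdq e0 he0 => hW.val d0 (hrest_full d0 h0) hdq e0 he0
        · exact fun d0 h0 hdq => hW.null d0 (hrest_full d0 h0) hdq
        · exact fun d0 h0 d1 h1 hdq0 hdq1 e0 he0 he1 =>
            hW.inj d0 (hrest_full d0 h0) d1 (hrest_full d1 h1) hdq0 hdq1 e0 he0 he1
        · intro d0 h0 hdq e0 he0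
          exact prec_down sub0 hnd (hcodom d0 h0 hdq e0 he0).1 h0
            (hW.order d0 (hrest_full d0 h0) hdq e0 he0)
        · intro e0 he0 henq d' hd' hdq' e1 he1 hprec
          obtain ⟨d1, hd1mem, hd1deq, hd1μ, hd1prec⟩ :=
            hW.fifo e0 (hrest_full e0 he0) henq d' (hrest_full d' hd') hdq' e1 he1
              (prec_up sub0 hprec)
          have hd1r : d1 ∈ rest := by
            rcases List.mem_cons.1 hd1mem with rfl | h
            · rw [hμe] at hd1μ; cases hd1μ
            · exact h
          exact ⟨d1, hd1r, hd1deq, hd1μ, prec_down sub0 hnd hd1r hd' hd1prec⟩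
        · intro d0 h0 hdq hnone
          have hAeq : {z : QEvent | z ∈ e :: rest ∧ z.isEnq = true ∧
              Precedes (e :: rest) z d0} =
              {z : QEvent | z ∈ rest ∧ z.isEnq = true ∧ Precedes rest z d0} := by
            ext z
            simp only [Set.mem_setOf_eq]
            constructor
            · rintro ⟨hz, hzenq, hzp⟩
              have hzr : z ∈ rest := by
                rcases List.mem_cons.1 hz with rfl | h
                · exact absurd hzenq (fun h => not_enq_deq h heDeq)
                · exact h
              exact ⟨hzr, hzenq, prec_down sub0 hnd hzr h0 hzp⟩
            · rintro ⟨hz, hzenq, hzp⟩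
              exact ⟨hrest_full z hz, hzenq, prec_up sub0 hzp⟩
          have hBeq : {z : QEvent | z ∈ e :: rest ∧ z.isDeq = true ∧
              Precedes (e :: rest) z d0 ∧ μ z ≠ none} =
              {z : QEvent | z ∈ rest ∧ z.isDeq = true ∧
                Precedes rest z d0 ∧ μ z ≠ none} := by
            ext z
            simp only [Set.mem_setOf_eq]
            constructor
            · rintro ⟨hz, hzdeq, hzp, hzμ⟩
              have hzr : z ∈ rest := by
                rcases List.mem_cons.1 hz with rfl | h
                · exact absurd hμe hzμ
                · exact h
              exact ⟨hzr, hzdeq, prec_down sub0 hnd hzr h0 hzp, hzμ⟩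
            · rintro ⟨hz, hzdeq, hzp, hzμ⟩
              exact ⟨hrest_full z hz, hzdeq, prec_up sub0 hzp, hzμ⟩
          have := hW.empty d0 (hrest_full d0 h0) hdq hnone
          rw [hAeq, hBeq] at this
          exact this
      | some x =>
        obtain ⟨E, hμe⟩ : ∃ E, μ e = some E := by
          cases h : μ e with
          | none =>
            have := (hW.null e hmem_e heDeq).1 h
            simp [he_def] at this
          | some E => exact ⟨E, rfl⟩
        obtain ⟨hE_full, hEenq⟩ := hW.codom e hmem_e heDeq E hμe
        obtain ⟨x', hEx', hdx'⟩ := hW.val e hmem_e heDeq E hμe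
        have hxx : x' = x := by
          have h : QAction.deq (some x) = QAction.deq (some x') := hdx'
          injection h with h'
          injection h' with h''
          exact h''.symm
        rw [hxx] at hEx' 
        have hEe : E ≠ e := fun h =>
          not_enq_deq (h ▸ hEenq) heDeq
        have hEP : E ∈ P :=
          mem_of_sublist_mid (precedes_iff.1 (hW.order e hmem_e heDeq E hμe)) hEe he_rest
        obtain ⟨E0, P', rfl⟩ : ∃ E0 P', P = E0 :: P' := by
          cases P with
          | nil => cases hEP
          | cons E0 P' => exact ⟨E0, P', rfl⟩
        have hE0E : E = E0 := by
          by_contra hne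
          have hEP' : E ∈ P' := by
            rcases List.mem_cons.1 hEP with h | h
            · exact absurd h hne
            · exact h
          have hE0enq : E0.isEnq = true := pending_enq hP E0 (List.mem_cons_self)
          have hE0mem : E0 ∈ (E0 :: P') ++ e :: rest := List.mem_append_left _ (List.mem_cons_self)
          have hprec0 : Precedes ((E0 :: P') ++ e :: rest) E0 E := by
            refine precedes_iff.2 ?_
            have : [E] <+ P' ++ e :: rest :=
              List.singleton_sublist.2 (List.mem_append_left _ hEP')
            simpa using this.cons₂ E0
          obtain ⟨d1, hd1mem, hd1deq, hd1μ, hd1prec⟩ :=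
            hW.fifo E0 hE0mem hE0enq e hmem_e heDeq E hμe hprec0
          have hd1ne : d1 ≠ e := by
            rintro rfl
            rw [hμe] at hd1μ
            cases hd1μ
            exact hne rfl
          have hd1P : d1 ∈ E0 :: P' :=
            mem_of_sublist_mid (precedes_iff.1 hd1prec) hd1ne he_rest
          exact not_enq_deq (pending_enq hP d1 hd1P) hd1deq
        subst hE0E
        obtain ⟨x0, q', rfl, hEx0, hP'⟩ :
            ∃ x0 q', q = x0 :: q' ∧ E.act = QAction.enq x0 ∧ Pending P' q' := by
          cases hP with
          | cons h1 h2 => exact ⟨_, _, rfl, h1, h2⟩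
        have hx0 : x0 = x := by
          rw [hEx'] at hEx0
          injection hEx0 with h
          exact h.symm
        rw [hx0]
        refine LegalFrom.cons u (QStep.deq x q') ?_
        -- build the smaller witness
        simp only [List.cons_append] at hnd hW
        have hndt : (P' ++ e :: rest).Nodup := hnd.of_cons
        have hE_not : E ∉ P' ++ e :: rest := (List.nodup_cons.1 hnd).1
        have hndP' : P'.Nodup := (List.nodup_append.1 hndt).1
        have hdisj : P'.Disjoint (e :: rest) := fun a ha hb => (List.nodup_append.1 hndt).2.2 a ha a hb rfl
        have he_P' : e ∉ P' := fun h => hdisj h (List.mem_cons_self)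
        have he_small : e ∉ P' ++ rest := by
          intro h
          rcases List.mem_append.1 h with h | h
          · exact he_P' h
          · exact he_rest h
        have hE_small : E ∉ P' ++ rest := by
          intro h; apply hE_not
          rcases List.mem_append.1 h with h | h
          · exact List.mem_append_left _ h
          · exact List.mem_append_right _ (List.mem_cons_of_mem e h)
        have sub1 : P' ++ rest <+ P' ++ e :: rest :=
          (List.sublist_cons_self e rest).append_left P'
        have sub_sf : P' ++ rest <+ E :: (P' ++ e :: rest) := sub1.cons E
        have hnd_small : (P' ++ rest).Nodup := sub1.nodup hndt
        have hsm_full : ∀ z ∈ P' ++ rest, z ∈ E :: (P' ++ e :: rest) :=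
          fun z hz => sub_sf.subset hz
        have hrest_small : ∀ z ∈ rest, z ∈ P' ++ rest := fun z hz => List.mem_append_right _ hz
        have hrest_full : ∀ z ∈ rest, z ∈ E :: (P' ++ e :: rest) :=
          fun z hz => hsm_full z (hrest_small z hz)
        have he_full : e ∈ E :: (P' ++ e :: rest) :=
          List.mem_cons_of_mem E (List.mem_append_right _ (List.mem_cons_self))
        have hE_full' : E ∈ E :: (P' ++ e :: rest) := List.mem_cons_self
        have hdeq_small : ∀ z ∈ P' ++ rest, z.isDeq = true → z ∈ rest := by
          intro z hz hzd
          rcases List.mem_append.1 hz with h | h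
          · exact absurd hzd (fun hh => not_enq_deq (pending_enq hP' z h) hh)
          · exact h
        have hsmall_ne_e : ∀ z ∈ P' ++ rest, z ≠ e := fun z hz h => he_small (h ▸ hz)
        have hsmall_ne_E : ∀ z ∈ P' ++ rest, z ≠ E := fun z hz h => hE_small (h ▸ hz)
        have hcodom : ∀ d0 ∈ P' ++ rest, d0.isDeq = true → ∀ e0, μ d0 = some e0 →
            e0 ∈ P' ++ rest ∧ e0.isEnq = true := by
          intro d0 h0 hdq e0 he0
          have h0r : d0 ∈ rest := hdeq_small d0 h0 hdq
          obtain ⟨hm, henq⟩ := hW.codom d0 (hrest_full d0 h0r) hdq e0 he0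
          refine ⟨?_, henq⟩
          have he0E : e0 ≠ E := by
            rintro rfl
            have : d0 = e := hW.inj d0 (hrest_full d0 h0r) e he_full hdq heDeq e0 he0 hμe
            exact he_rest (this ▸ h0r)
          have he0e : e0 ≠ e := fun h => not_enq_deq henq (h ▸ heDeq)
          rcases List.mem_cons.1 hm with rfl | hm'
          · exact absurd rfl he0E
          rcases List.mem_append.1 hm' with h | h
          · exact List.mem_append_left _ h
          rcases List.mem_cons.1 h with rfl | h
          · exact absurd rfl he0e
          · exact List.mem_append_right _ h
        refine ih P' q' μ hP' hnd_small ?_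
        refine {
          codom := hcodom, val := ?_, null := ?_, inj := ?_, order := ?_,
          fifo := ?_, empty := ?_ }
        · intro d0 h0 hdq e0 he0
          exact hW.val d0 (hrest_full d0 (hdeq_small d0 h0 hdq)) hdq e0 he0
        · intro d0 h0 hdq
          exact hW.null d0 (hrest_full d0 (hdeq_small d0 h0 hdq)) hdq
        · intro d0 h0 d1 h1 hdq0 hdq1 e0 he0 he1
          exact hW.inj d0 (hrest_full d0 (hdeq_small d0 h0 hdq0))
            d1 (hrest_full d1 (hdeq_small d1 h1 hdq1)) hdq0 hdq1 e0 he0 he1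
        · intro d0 h0 hdq e0 he0
          exact prec_down sub_sf hnd (hcodom d0 h0 hdq e0 he0).1 h0
            (hW.order d0 (hrest_full d0 (hdeq_small d0 h0 hdq)) hdq e0 he0)
        · intro e0 he0 henq d' hd' hdq' e1 he1 hprec
          obtain ⟨d1, hd1mem, hd1deq, hd1μ, hd1prec⟩ :=
            hW.fifo e0 (hsm_full e0 he0) henq d' (hrest_full d' (hdeq_small d' hd' hdq')) hdq'
              e1 he1 (prec_up sub_sf hprec)
          have hd1small : d1 ∈ P' ++ rest := by
            have hd1ne : d1 ≠ e := by
              rintro rfl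
              rw [hμe] at hd1μ
              cases hd1μ
              exact hE_small he0
            rcases List.mem_cons.1 hd1mem with rfl | hm'
            · exact absurd hd1deq (fun h => not_enq_deq hEenq h)
            rcases List.mem_append.1 hm' with h | h
            · exact absurd hd1deq (fun hh => not_enq_deq (pending_enq hP' d1 h) hh)
            rcases List.mem_cons.1 h with rfl | h
            · exact absurd rfl hd1ne
            · exact List.mem_append_right _ h
          exact ⟨d1, hd1small, hd1deq, hd1μ, prec_down sub_sf hnd hd1small hd' hd1prec⟩
        · intro d0 h0 hdq hnone
          have h0r : d0 ∈ rest := hdeq_small d0 h0 hdq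
          have hAeq : {z : QEvent | z ∈ E :: (P' ++ e :: rest) ∧ z.isEnq = true ∧
              Precedes (E :: (P' ++ e :: rest)) z d0} =
              insert E {z : QEvent | z ∈ P' ++ rest ∧ z.isEnq = true ∧
                Precedes (P' ++ rest) z d0} := by
            ext z
            simp only [Set.mem_insert_iff, Set.mem_setOf_eq]
            constructor
            · rintro ⟨hz, hzenq, hzp⟩
              rcases List.mem_cons.1 hz with rfl | hz'
              · exact Or.inl rfl
              right
              have hzne : z ≠ e := fun h => not_enq_deq hzenq (h ▸ heDeq)
              have hzsmall : z ∈ P' ++ rest := by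
                rcases List.mem_append.1 hz' with h | h
                · exact List.mem_append_left _ h
                rcases List.mem_cons.1 h with rfl | h
                · exact absurd rfl hzne
                · exact List.mem_append_right _ h
              exact ⟨hzsmall, hzenq, prec_down sub_sf hnd hzsmall h0 hzp⟩
            · rintro (rfl | ⟨hz, hzenq, hzp⟩)
              · exact ⟨hE_full', hEenq,
                  prec_head (List.mem_append_right _ (List.mem_cons_of_mem e h0r))⟩
              · exact ⟨hsm_full z hz, hzenq, prec_up sub_sf hzp⟩
          have hBeq : {z : QEvent | z ∈ E :: (P' ++ e :: rest) ∧ z.isDeq = true ∧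
              Precedes (E :: (P' ++ e :: rest)) z d0 ∧ μ z ≠ none} =
              insert e {z : QEvent | z ∈ P' ++ rest ∧ z.isDeq = true ∧
                Precedes (P' ++ rest) z d0 ∧ μ z ≠ none} := by
            ext z
            simp only [Set.mem_insert_iff, Set.mem_setOf_eq]
            constructor
            · rintro ⟨hz, hzdeq, hzp, hzμ⟩
              rcases List.mem_cons.1 hz with rfl | hz'
              · exact absurd hzdeq (fun h => not_enq_deq hEenq h)
              rcases List.mem_append.1 hz' with h | h
              · exact absurd hzdeq (fun hh => not_enq_deq (pending_enq hP' z h) hh)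
              rcases List.mem_cons.1 h with rfl | h
              · exact Or.inl rfl
              right
              have hzsmall : z ∈ P' ++ rest := List.mem_append_right _ h
              exact ⟨hzsmall, hzdeq, prec_down sub_sf hnd hzsmall h0 hzp, hzμ⟩
            · rintro (rfl | ⟨hz, hzdeq, hzp, hzμ⟩)
              · refine ⟨he_full, heDeq, ?_, by rw [hμe]; simp⟩
                exact precedes_iff.2 ((precedes_iff.1 (prec_mid (P := P') h0r)).cons E)
              · exact ⟨hsm_full z hz, hzdeq, prec_up sub_sf hzp, hzμ⟩
          have hcount := hW.empty d0 (hrest_full d0 h0r) hdq hnone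
          rw [hAeq, hBeq] at hcount
          have hfinA : {z : QEvent | z ∈ P' ++ rest ∧ z.isEnq = true ∧
              Precedes (P' ++ rest) z d0}.Finite :=
            finite_sub_list (l := P' ++ rest) (fun z hz => hz.1)
          have hfinB : {z : QEvent | z ∈ P' ++ rest ∧ z.isDeq = true ∧
              Precedes (P' ++ rest) z d0 ∧ μ z ≠ none}.Finite :=
            finite_sub_list (l := P' ++ rest) (fun z hz => hz.1)
          rw [Set.ncard_insert_of_notMem (fun h => hE_small h.1) hfinA,
            Set.ncard_insert_of_notMem (fun h => he_small h.1) hfinB] at hcount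
          omega



/-- A queue behavior is legal iff it has a sequential witness. -/
theorem legal_iff_seqWitness (b : Behavior) (hnd : b.Nodup) :
    Legal b ↔ ∃ μ : QEvent → Option QEvent, SeqWitness b μ := by
  constructor
  · intro hl
    have h := legal_witness hl [] List.Forall₂.nil (by simpa using hnd)
    simpa using h
  · rintro ⟨μ, hw⟩
    exact witness_legal b [] [] μ List.Forall₂.nil (by simpa using hnd) (by simpa using hw)
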